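/- In a simply laced root system, dominant weights can fire to dominant weights: if λ is dominant and λ → λ + β is a central-firing move (β ∈ Φ⁺, ⟨λ, β∨⟩ = 0), then letting θ' be the highest root of the irreducible component of the parabolic sub-root system Φ ∩ Span{αᵢ : ⟨λ, αᵢ∨⟩ = 0} containing β, the weight λ + θ' is dominant and lies in the Weyl orbit of λ + β. -/

import Mathlib

open scoped RealInnerProductSpace

noncomputable section

namespace CF

variable {V : Type*} [NormedAddCommGroup V] [InnerProductSpace ℝ V]

/-- The coroot `α∨ = 2α/⟨α,α⟩`. -/
def coroot (α : V) : V := (2 / ⟪α, α⟫) • α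

/-- A reduced crystallographic root system in `V`. -/
def IsRootSystem (Φ : Set V) : Prop :=
  Φ.Finite ∧ (0 : V) ∉ Φ ∧ Submodule.span ℝ Φ = ⊤ ∧
    (∀ α ∈ Φ, ∀ β ∈ Φ, β - ⟪β, coroot α⟫ • α ∈ Φ) ∧
    (∀ α ∈ Φ, ∀ t : ℝ, t • α ∈ Φ → t = 1 ∨ t = -1) ∧
    (∀ α ∈ Φ, ∀ β ∈ Φ, ∃ n : ℤ, ⟪β, coroot α⟫ = (n : ℝ))

/-- A choice of positive roots `Φ⁺ ⊆ Φ` (exactly one of `±α` is positive, and the positive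
roots lie strictly on one side of a hyperplane). -/
def IsPositiveSystem (Φ Φp : Set V) : Prop :=
  Φp ⊆ Φ ∧ (∀ α ∈ Φ, (α ∈ Φp ∨ -α ∈ Φp) ∧ ¬(α ∈ Φp ∧ -α ∈ Φp)) ∧
    ∃ ℓ : V →ₗ[ℝ] ℝ, ∀ α ∈ Φp, 0 < ℓ α

/-- The weight lattice `P = {v : ⟨v, α∨⟩ ∈ ℤ for all α ∈ Φ}`. -/
def weightLattice (Φ : Set V) : Set V :=
  {v | ∀ α ∈ Φ, ∃ n : ℤ, ⟪v, coroot α⟫ = (n : ℝ)}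

/-- Central-firing: `λ → λ + α` whenever `α ∈ Φ⁺` and `⟨λ, α∨⟩ = 0`. -/
def fire (Φp : Set V) (lam mu : V) : Prop :=
  ∃ α ∈ Φp, ⟪lam, coroot α⟫ = 0 ∧ mu = lam + α

/-- The Weyl group: the group of linear isometries generated by the reflections `s_α`, `α ∈ Φ`. -/
def weylGroup (Φ : Set V) : Subgroup (V ≃ₗᵢ[ℝ] V) :=
  Subgroup.closure {g | ∃ α ∈ Φ, ∀ v, g v = v - ⟪v, coroot α⟫ • α}

/-- `v` and `w` lie in the same Weyl group orbit. -/
def sameOrbit (Φ : Set V) (v w : V) : Prop := ∃ g ∈ weylGroup Φ, g v = w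

def weylOrbit (Φ : Set V) (v : V) : Set V := {w | sameOrbit Φ v w}

/-- The root lattice `Q`. -/
def rootLattice (Φ : Set V) : AddSubgroup V := AddSubgroup.closure Φ

/-- `Π^Q(λ)`: the points of the permutohedron `Π(λ) = ConvexHull(Wλ)` lying in `λ + Q`. -/
def permQ (Φ : Set V) (lam : V) : Set V :=
  {mu | mu ∈ convexHull ℝ (weylOrbit Φ lam) ∧ lam - mu ∈ rootLattice Φ}

def IsDominant (Δ : Set V) (lam : V) : Prop := ∀ a ∈ Δ, 0 ≤ ⟪lam, coroot a⟫

def IsStrictlyDominant (Δ : Set V) (lam : V) : Prop := ∀ a ∈ Δ, 0 < ⟪lam, coroot a⟫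

/-- A minuscule weight: a nonzero dominant weight whose `Π^Q` consists of its Weyl orbit. -/
def IsMinuscule (Φ Δ : Set V) (w : V) : Prop :=
  w ≠ 0 ∧ IsDominant Δ w ∧ ∀ mu ∈ permQ Φ w, sameOrbit Φ w mu

/-- `Δ` is a system of simple roots for the positive system `Φ⁺`. -/
def IsSimpleSystem (Φp : Set V) (Δ : Finset V) : Prop :=
  (Δ : Set V) ⊆ Φp ∧ LinearIndependent ℝ (fun a : (Δ : Set V) => (a : V)) ∧
    ∀ α ∈ Φp, ∃ c : V → ℝ, (∀ a ∈ Δ, 0 ≤ c a) ∧ α = ∑ a ∈ Δ, c a • a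

def IsSimplyLaced (Φ : Set V) : Prop := ∀ α ∈ Φ, ∀ β ∈ Φ, ⟪α, α⟫ = ⟪β, β⟫

/-- Irreducibility: `Φ` cannot be split into two nonempty mutually orthogonal parts. -/
def IsIrreducibleRS (Φ : Set V) : Prop :=
  ¬ ∃ S T : Set V, S.Nonempty ∧ T.Nonempty ∧ S ∪ T = Φ ∧ ∀ a ∈ S, ∀ b ∈ T, ⟪a, b⟫ = 0

/-- The firing span `FS_S(λ) = Span_ℝ{μ − λ : λ →* μ}`. -/
def firingSpan (Φp : Set V) (lam : V) : Submodule ℝ V :=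
  Submodule.span ℝ {d | ∃ mu, Relation.ReflTransGen (fire Φp) lam mu ∧ d = mu - lam}

/-- Central-firing on Weyl orbits: `Wλ → Wμ` iff some representatives fire. -/
def ofire (Φ Φp : Set V) (lam mu : V) : Prop :=
  ∃ lam' mu', sameOrbit Φ lam lam' ∧ sameOrbit Φ mu mu' ∧ fire Φp lam' mu'

/-- Connectivity of roots within a subset `Ψ` (via non-orthogonality). -/
def sameComponent (Ψ : Set V) (β γ : V) : Prop :=
  Relation.ReflTransGen (fun x y => x ∈ Ψ ∧ y ∈ Ψ ∧ ⟪x, y⟫ ≠ 0) β γ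

/-- Confluence of central-firing from `λ`: all maximal firing sequences from `λ`
terminate at the same weight. -/
def ConfluentFrom (S : Set V) (lam : V) : Prop :=
  ∀ mu₁ mu₂ : V, Relation.ReflTransGen (fire S) lam mu₁ → (¬ ∃ ν, fire S mu₁ ν) →
    Relation.ReflTransGen (fire S) lam mu₂ → (¬ ∃ ν, fire S mu₂ ν) → mu₁ = mu₂


/-! ### Auxiliary lemmas -/

lemma coroot_inner (α v : V) : ⟪v, coroot α⟫ = 2 / ⟪α, α⟫ * ⟪v, α⟫ := by
  rw [coroot, real_inner_smul_right]

/-- The reflection `s_α` as a linear isometry equivalence. -/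
def srefl (α : V) : V ≃ₗᵢ[ℝ] V := Submodule.reflection (ℝ ∙ α)ᗮ

lemma srefl_apply (α v : V) : srefl α v = v - ⟪v, coroot α⟫ • α := by
  rw [srefl, Submodule.reflection_orthogonal_apply, Submodule.reflection_singleton_apply]
  rw [coroot, real_inner_smul_right, real_inner_self_eq_norm_sq, real_inner_comm]
  simp only [RCLike.ofReal_real_eq_id, id_eq]
  match_scalars <;> ring

lemma srefl_mem {Φ : Set V} {α : V} (hα : α ∈ Φ) : srefl α ∈ weylGroup Φ :=
  Subgroup.subset_closure ⟨α, hα, srefl_apply α⟩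

lemma srefl_fix {α v : V} (h : ⟪v, α⟫ = 0) : srefl α v = v := by
  rw [srefl_apply, coroot_inner, h, mul_zero, zero_smul, sub_zero]

/-- Pairing of two roots in a simply laced root system. -/
lemma pairing (Φ : Set V) (hΦ : IsRootSystem Φ) (hsl : IsSimplyLaced Φ)
    {γ δ : V} (hγ : γ ∈ Φ) (hδ : δ ∈ Φ) :
    ∃ n : ℤ, ⟪δ, coroot γ⟫ = (n : ℝ) ∧ ⟪γ, coroot δ⟫ = (n : ℝ) ∧
      -2 ≤ n ∧ n ≤ 2 ∧ (n = 2 → δ = γ) ∧ (n = -2 → δ = -γ) := by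
  have hγ0 : γ ≠ 0 := fun h => hΦ.2.1 (h ▸ hγ)
  have ht : 0 < ⟪γ, γ⟫ := lt_of_le_of_ne real_inner_self_nonneg
    (fun h => hγ0 (inner_self_eq_zero.mp h.symm))
  have hδδ : ⟪δ, δ⟫ = ⟪γ, γ⟫ := hsl δ hδ γ hγ
  obtain ⟨n, hn⟩ := hΦ.2.2.2.2.2 γ hγ δ hδ
  have hp : ⟪δ, γ⟫ = (n : ℝ) * ⟪γ, γ⟫ / 2 := by
    rw [coroot_inner] at hn
    field_simp at hn
    linarith
  have hp2 : ⟪γ, coroot δ⟫ = (n : ℝ) := by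
    rw [coroot_inner, hδδ, real_inner_comm δ γ, hp]
    field_simp
  have hcs := real_inner_mul_inner_self_le δ γ
  rw [hp, hδδ] at hcs
  have hb : (n : ℝ) ^ 2 ≤ 4 := by nlinarith [mul_pos ht ht]
  have hbZ : n ^ 2 ≤ 4 := by exact_mod_cast hb
  have h1 : -2 ≤ n := by nlinarith
  have h2 : n ≤ 2 := by nlinarith
  refine ⟨n, hn, hp2, h1, h2, ?_, ?_⟩
  · intro he
    have h0 : ⟪δ - γ, δ - γ⟫ = 0 := by
      rw [inner_sub_left, inner_sub_right, inner_sub_right, hδδ, hp,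
        real_inner_comm δ γ, hp, he]
      push_cast
      ring
    exact sub_eq_zero.mp (inner_self_eq_zero.mp h0)
  · intro he
    have h0 : ⟪δ + γ, δ + γ⟫ = 0 := by
      rw [inner_add_left, inner_add_right, inner_add_right, hδδ, hp,
        real_inner_comm δ γ, hp, he]
      push_cast
      ring
    have := inner_self_eq_zero.mp h0
    rw [add_eq_zero_iff_eq_neg] at this
    exact this

/-- Two non-orthogonal roots in a simply laced root system are conjugate by an element of
the Weyl group fixing everything orthogonal to both. -/
lemma conj_step (Φ : Set V) (hΦ : IsRootSystem Φ) (hsl : IsSimplyLaced Φ)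
    {γ δ : V} (hγ : γ ∈ Φ) (hδ : δ ∈ Φ) (hne : ⟪γ, δ⟫ ≠ 0) :
    ∃ g ∈ weylGroup Φ, g γ = δ ∧ ∀ v, ⟪v, γ⟫ = 0 → ⟪v, δ⟫ = 0 → g v = v := by
  obtain ⟨n, hδγ, hγδ, hn1, hn2, he2, hem2⟩ := pairing Φ hΦ hsl hγ hδ
  have hγ0 : γ ≠ 0 := fun h => hΦ.2.1 (h ▸ hγ)
  have ht : 0 < ⟪γ, γ⟫ := lt_of_le_of_ne real_inner_self_nonneg
    (fun h => hγ0 (inner_self_eq_zero.mp h.symm))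
  have hδ0 : δ ≠ 0 := fun h => hΦ.2.1 (h ▸ hδ)
  have htδ : 0 < ⟪δ, δ⟫ := lt_of_le_of_ne real_inner_self_nonneg
    (fun h => hδ0 (inner_self_eq_zero.mp h.symm))
  have hγγ : ⟪γ, coroot γ⟫ = 2 := by
    rw [coroot_inner]; field_simp
  have hδδ : ⟪δ, coroot δ⟫ = 2 := by
    rw [coroot_inner]; field_simp
  have hn0 : n ≠ 0 := by
    intro h
    apply hne
    rw [h] at hγδ
    rw [coroot_inner] at hγδ
    push_cast at hγδ
    rcases mul_eq_zero.mp hγδ with h' | h'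
    · exact absurd h' (div_ne_zero two_ne_zero (ne_of_gt htδ))
    · exact h'
  interval_cases n
  · -- n = -2, δ = -γ
    refine ⟨srefl γ, srefl_mem hγ, ?_, fun v hv _ => srefl_fix hv⟩
    rw [hem2 rfl, srefl_apply, hγγ]
    module
  · -- n = -1
    refine ⟨srefl γ * srefl δ, mul_mem (srefl_mem hγ) (srefl_mem hδ), ?_, ?_⟩
    · have e1 : srefl δ γ = γ + δ := by
        rw [srefl_apply, hγδ]; push_cast; module
      have e2 : srefl γ (γ + δ) = δ := by
        rw [srefl_apply, inner_add_left, hγγ, hδγ]; push_cast; module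
      show srefl γ (srefl δ γ) = δ
      rw [e1, e2]
    · intro v h1 h2
      show srefl γ (srefl δ v) = v
      rw [srefl_fix h2, srefl_fix h1]
  · exact absurd rfl hn0
  · -- n = 1
    refine ⟨srefl δ * (srefl γ * srefl δ),
      mul_mem (srefl_mem hδ) (mul_mem (srefl_mem hγ) (srefl_mem hδ)), ?_, ?_⟩
    · have e1 : srefl δ γ = γ - δ := by
        rw [srefl_apply, hγδ]; push_cast; module
      have e2 : srefl γ (γ - δ) = -δ := by
        rw [srefl_apply, inner_sub_left, hγγ, hδγ]; push_cast; module
      have e3 : srefl δ (-δ) = δ := by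
        rw [srefl_apply, inner_neg_left, hδδ]; module
      show srefl δ (srefl γ (srefl δ γ)) = δ
      rw [e1, e2, e3]
    · intro v h1 h2
      show srefl δ (srefl γ (srefl δ v)) = v
      rw [srefl_fix h2, srefl_fix h1, srefl_fix h2]
  · -- n = 2, δ = γ
    exact ⟨1, one_mem _, by rw [he2 rfl]; rfl, fun v _ _ => rfl⟩

/-- Roots in the same component are conjugate by a Weyl group element fixing `lam`. -/
lemma chain_conj (Φ parab : Set V) (hΦ : IsRootSystem Φ) (hsl : IsSimplyLaced Φ)
    (hsub : parab ⊆ Φ) (lam : V) (horth : ∀ v ∈ parab, ⟪lam, v⟫ = 0)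
    {β γ : V} (h : sameComponent parab β γ) :
    ∃ g ∈ weylGroup Φ, g β = γ ∧ g lam = lam := by
  induction h with
  | refl => exact ⟨1, one_mem _, rfl, rfl⟩
  | tail _ r ih =>
    obtain ⟨g, hg, hgβ, hgl⟩ := ih
    obtain ⟨hb, hc, hne⟩ := r
    obtain ⟨g', hg', hgbc, hfix⟩ := conj_step Φ hΦ hsl (hsub hb) (hsub hc) hne
    refine ⟨g' * g, mul_mem hg' hg, ?_, ?_⟩
    · show g' (g β) = _
      rw [hgβ, hgbc]
    · show g' (g lam) = lam
      rw [hgl, hfix lam (horth _ hb) (horth _ hc)]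

lemma orth_span (lam : V) (S : Set V) {v : V}
    (hv : v ∈ (Submodule.span ℝ {a : V | a ∈ S ∧ ⟪lam, coroot a⟫ = 0} : Submodule ℝ V)) :
    ⟪lam, v⟫ = 0 := by
  induction hv using Submodule.span_induction with
  | mem x hx =>
    obtain ⟨-, hx2⟩ := hx
    rw [coroot_inner] at hx2
    rcases eq_or_ne ⟪x, x⟫ 0 with h | h
    · rw [inner_self_eq_zero.mp h, inner_zero_right]
    · exact (mul_eq_zero.mp hx2).resolve_left (div_ne_zero two_ne_zero h)
  | zero => exact inner_zero_right _
  | add x y _ _ h1 h2 => rw [inner_add_right, h1, h2, add_zero]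
  | smul r x _ h => rw [real_inner_smul_right, h, mul_zero]

lemma coeff_nonneg (Δ : Finset V)
    (hli : LinearIndependent ℝ (fun a : ((Δ : Finset V) : Set V) => (a : V)))
    {a : V} (ha : a ∈ Δ) (c : V → ℝ) (hc : ∀ b ∈ Δ, 0 ≤ c b) {r : ℝ}
    (h : r • a = ∑ b ∈ Δ, c b • b) : 0 ≤ r := by
  classical
  have hli' := linearIndependent_iff'.mp hli
  have hsum : ∑ i ∈ Δ.attach, (c (i : V) - if (i : V) = a then r else 0) • (i : V) = 0 := by
    rw [Finset.sum_attach Δ (fun b => (c b - if b = a then r else 0) • b)]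
    have : ∑ b ∈ Δ, ((c b - if b = a then r else 0) • b)
        = (∑ b ∈ Δ, c b • b) - ∑ b ∈ Δ, (if b = a then r • b else 0) := by
      rw [← Finset.sum_sub_distrib]
      refine Finset.sum_congr rfl fun b _ => ?_
      by_cases hb : b = a <;> simp [hb, sub_smul]
    rw [this, Finset.sum_ite_eq' Δ a (fun b => r • b), if_pos ha, ← h, sub_self]
  have := hli' Δ.attach (fun i => c (i : V) - if (i : V) = a then r else 0) hsum
    ⟨a, ha⟩ (Finset.mem_attach _ _)
  simp only [eq_self_iff_true, if_true] at this
  have hca := hc a ha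
  linarith

/-- in a simply laced root system, if `λ` is dominant and `λ → λ + β` is a
central-firing move, and `θ'` is the highest root of the irreducible component containing `β`
of the parabolic sub-root system `Φ ∩ Span{αᵢ : ⟨λ, αᵢ∨⟩ = 0}`, then `λ + θ'` is dominant
and lies in the Weyl orbit of `λ + β`. -/
theorem simply_laced_dominant_fire (Φ Φp Δ : Finset V)
    (hΦ : IsRootSystem (Φ : Set V)) (hp : IsPositiveSystem (Φ : Set V) (Φp : Set V))
    (hΔ : IsSimpleSystem (Φp : Set V) Δ)
    (hsl : IsSimplyLaced (Φ : Set V)) (hirr : IsIrreducibleRS (Φ : Set V))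
    (lam : V) (hlam : lam ∈ weightLattice (Φ : Set V))
    (hdom : IsDominant (Δ : Set V) lam)
    (β : V) (hβ : β ∈ Φp) (horth : ⟪lam, coroot β⟫ = 0)
    -- the parabolic sub-root system `Φ_{I⁰_λ}` and the irreducible component of `β` in it
    (parab comp : Set V)
    (hparab : parab = {γ | γ ∈ (Φ : Set V) ∧
      γ ∈ (Submodule.span ℝ {a : V | a ∈ Δ ∧ ⟪lam, coroot a⟫ = 0} : Submodule ℝ V)})
    (hcomp : comp = {γ | γ ∈ parab ∧ sameComponent parab β γ})
    -- `θ'` is the highest root of that component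
    (θ' : V) (hθmem : θ' ∈ comp)
    (hθhigh : ∀ γ ∈ comp, ∃ c : V → ℝ, (∀ a ∈ Δ, 0 ≤ c a) ∧ θ' - γ = ∑ a ∈ Δ, c a • a) :
    IsDominant (Δ : Set V) (lam + θ') ∧ sameOrbit (Φ : Set V) (lam + β) (lam + θ') := by
  obtain ⟨hΦp, hpm, hℓ⟩ := hp
  obtain ⟨hΔp, hli, hΔpos⟩ := hΔ
  have hsubΦ : parab ⊆ (Φ : Set V) := by
    rw [hparab]; intro x hx; exact hx.1
  have horthp : ∀ v ∈ parab, ⟪lam, v⟫ = 0 := by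
    rw [hparab]; rintro v ⟨-, hv⟩; exact orth_span lam _ hv
  have hθparab : θ' ∈ parab := (hcomp ▸ hθmem).1
  have hθcomp' : sameComponent parab β θ' := (hcomp ▸ hθmem).2
  have hθΦ : θ' ∈ (Φ : Set V) := hsubΦ hθparab
  have hθspan : θ' ∈ (Submodule.span ℝ {a : V | a ∈ Δ ∧ ⟪lam, coroot a⟫ = 0} : Submodule ℝ V) := by
    have h := hθparab; rw [hparab] at h; exact h.2
  have hlamθ : ⟪lam, θ'⟫ = 0 := horthp θ' hθparab
  constructor
  · -- dominance
    intro a haΔ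
    have haΦ : a ∈ (Φ : Set V) := hΦp (hΔp haΔ)
    have ha0 : a ≠ 0 := fun h => hΦ.2.1 (h ▸ haΦ)
    have hta : 0 < ⟪a, a⟫ := lt_of_le_of_ne real_inner_self_nonneg
      (fun h => ha0 (inner_self_eq_zero.mp h.symm))
    obtain ⟨n, hθa, haθ, hn1, hn2, he2, hem2⟩ := pairing (Φ : Set V) hΦ hsl haΦ hθΦ
    rw [inner_add_left, hθa]
    rcases eq_or_lt_of_le (hdom a haΔ) with hca | hca
    · -- ⟪lam, a∨⟫ = 0
      suffices h : (0 : ℝ) ≤ (n : ℝ) by linarith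
      have haspan : a ∈ (Submodule.span ℝ {b : V | b ∈ Δ ∧ ⟪lam, coroot b⟫ = 0} : Submodule ℝ V) :=
        Submodule.subset_span ⟨haΔ, hca.symm⟩
      have haparab : a ∈ parab := by rw [hparab]; exact ⟨haΦ, haspan⟩
      rcases eq_or_ne ⟪θ', a⟫ 0 with hz | hz
      · have : (n : ℝ) = 0 := by rw [← hθa, coroot_inner, hz, mul_zero]
        rw [this]
      · by_contra hneg
        push_neg at hneg
        have hnle : n ≤ -1 := by
          have h' : n < 0 := by exact_mod_cast hneg
          omega
        interval_cases n
        · -- n = -2 : θ' = -a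
          have hθ'a : θ' = -a := hem2 rfl
          have hacomp : a ∈ comp := by
            rw [hcomp]; exact ⟨haparab, hθcomp'.tail ⟨hθparab, haparab, hz⟩⟩
          obtain ⟨c, hc0, hcs⟩ := hθhigh a hacomp
          have he : (-2 : ℝ) • a = ∑ b ∈ Δ, c b • b := by
            rw [← hcs, hθ'a]; module
          have := coeff_nonneg Δ hli haΔ c hc0 he
          linarith
        · -- n = -1 : θ' + a ∈ comp
          have hγΦ : θ' + a ∈ (Φ : Set V) := by
            have h4 := hΦ.2.2.2.1 a haΦ θ' hθΦ
            rw [hθa] at h4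
            push_cast at h4
            rw [neg_smul, one_smul, sub_neg_eq_add] at h4
            exact h4
          have hγparab : θ' + a ∈ parab := by
            rw [hparab]; exact ⟨hγΦ, Submodule.add_mem _ hθspan haspan⟩
          have hpa : ⟪θ', a⟫ = -⟪a, a⟫ / 2 := by
            rw [coroot_inner] at hθa
            push_cast at hθa
            field_simp at hθa
            linarith
          have hγne : ⟪θ', θ' + a⟫ ≠ 0 := by
            rw [inner_add_right, hsl θ' hθΦ a haΦ, hpa]
            intro hcontra
            nlinarith
          have hγcomp : θ' + a ∈ comp := by
            rw [hcomp]; exact ⟨hγparab, hθcomp'.tail ⟨hθparab, hγparab, hγne⟩⟩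
          obtain ⟨c, hc0, hcs⟩ := hθhigh _ hγcomp
          have he : (-1 : ℝ) • a = ∑ b ∈ Δ, c b • b := by
            rw [← hcs]; module
          have := coeff_nonneg Δ hli haΔ c hc0 he
          linarith
    · -- ⟪lam, a∨⟫ > 0
      obtain ⟨m, hm⟩ := hlam a haΦ
      have hm1 : 1 ≤ m := by
        have h0 : (0 : ℝ) < (m : ℝ) := hm ▸ hca
        have h1 : 0 < m := by exact_mod_cast h0
        omega
      have hnm1 : -1 ≤ n := by
        by_contra hcon
        push_neg at hcon
        have hne2 : n = -2 := by omega
        have hθ'a := hem2 hne2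
        rw [hθ'a, inner_neg_right, neg_eq_zero] at hlamθ
        rw [coroot_inner, hlamθ, mul_zero] at hca
        exact lt_irrefl _ hca
      rw [hm]
      have h1 : (1 : ℝ) ≤ (m : ℝ) := by exact_mod_cast hm1
      have h2 : (-1 : ℝ) ≤ (n : ℝ) := by exact_mod_cast hnm1
      linarith
  · -- orbit
    obtain ⟨g, hg, hgβ, hgl⟩ :=
      chain_conj (Φ : Set V) parab hΦ hsl hsubΦ lam horthp hθcomp'
    exact ⟨g, hg, by rw [map_add, hgβ, hgl]⟩

end CF
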